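/- arXiv:1209.6158 — 7 statements merged into one kernel-verified Lean document; each statement's English description precedes it below -/
import Mathlib

section
/- For every n : ℕ and every b : ℕ → Bool, max (HGP ⌈n/2⌉ (ODD b)) (HGP ⌊n/2⌋ (EVEN b)) ≤ HGP n b. (Splitting the rumor spreading at the very beginning between two processors cannot increase the time complexity.) -/
def tailSeq (b : ℕ → Bool) : ℕ → Bool := fun i => b (i+1)
def oddSeq (b : ℕ → Bool) : ℕ → Bool := fun i => b (2*i)
def evenSeq (b : ℕ → Bool) : ℕ → Bool := fun i => b (2*i+1)

/-- Time complexity of the GP algorithm with `n` uninformed processors under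
failure pattern `b` (`b i = true` means the `i`-th request is successful). -/
def HGP : ℕ → (ℕ → Bool) → ℕ
  | 0, _ => 0
  | n+1, b =>
    if b 0 then
      1 + max (HGP ((n+1)/2) (oddSeq (tailSeq b))) (HGP (n/2) (evenSeq (tailSeq b)))
    else
      1 + HGP n (tailSeq b)
decreasing_by all_goals omega

lemma even_eq_odd_tail (b : ℕ → Bool) : evenSeq b = oddSeq (tailSeq b) := rfl

lemma tail_odd (b : ℕ → Bool) : tailSeq (oddSeq b) = evenSeq (tailSeq b) := by
  funext i
  show b (2*(i+1)) = b (2*i+1+1)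
  congr 1

/-- Splitting the rumor spreading at the very beginning between two processors
cannot increase the time complexity. -/
theorem hgp_splitting (n : ℕ) (b : ℕ → Bool) :
    max (HGP ((n+1)/2) (oddSeq b)) (HGP (n/2) (evenSeq b)) ≤ HGP n b := by
  induction n using Nat.strong_induction_on generalizing b with
  | _ n ih =>
    match n with
    | 0 => simp [HGP]
    | n+1 =>
      have hhalf : (n+1+1)/2 = n/2 + 1 := by omega
      have hob : oddSeq b 0 = b 0 := rfl
      rw [HGP]
      cases h : b 0 with
      | false =>
        simp only [Bool.false_eq_true, if_false]
        have ihn := ih n (by omega) (tailSeq b)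
        apply max_le
        · rw [hhalf, HGP, hob, h]
          simp only [Bool.false_eq_true, if_false, tail_odd]
          exact Nat.add_le_add_left (le_trans (le_max_right _ _) ihn) 1
        · rw [even_eq_odd_tail]
          exact le_trans (le_trans (le_max_left _ _) ihn) (Nat.le_add_left _ 1)
      | true =>
        simp only [if_true]
        apply max_le
        · rw [hhalf, HGP, hob, h]
          simp only [if_true, tail_odd]
          have ihk := ih (n/2) (by omega) (evenSeq (tailSeq b))
          exact Nat.add_le_add_left (le_trans ihk (le_max_right _ _)) 1
        · rw [even_eq_odd_tail]
          exact le_trans (le_max_left _ _) (Nat.le_add_left _ 1)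
end

section
/- The function HGP is monotone increasing in its first argument: for all m n : ℕ with m ≤ n and every b : ℕ → Bool, HGP m b ≤ HGP n b. -/
/-- `HGP` is monotone increasing in the number of uninformed processors. -/
theorem hgp_monotone_n (m n : ℕ) (hmn : m ≤ n) (b : ℕ → Bool) :
    HGP m b ≤ HGP n b := by
  induction n using Nat.strong_induction_on generalizing m b with
  | _ n ih =>
    match m, n with
    | 0, n => simp [HGP]
    | m+1, n+1 =>
      rw [HGP, HGP]
      cases h : b 0 <;> simp only [h, Bool.false_eq_true, if_false, if_true]
      · exact Nat.add_le_add_left (ih n (by omega) m (by omega) _) 1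
      · refine Nat.add_le_add_left (max_le_max ?_ ?_) 1
        · exact ih ((n+1)/2) (by omega) ((m+1)/2) (by omega) _
        · exact ih (n/2) (by omega) (m/2) (by omega) _
end

section
/- Coupling of the GP and WU models: for every n : ℕ and every b : ℕ → Bool, (HGP n b : ℕ∞) ≤ HWU n b. That is, on every failure pattern the execution of the GP algorithm is at least as fast as the execution of the WU algorithm. -/
/-- Time complexity of the WU (wakeup) algorithm with `n` uninformed processors
under failure pattern `b`, valued in the extended naturals. -/
noncomputable def HWU : ℕ → (ℕ → Bool) → ℕ∞
  | 0, _ => 0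
  | n+1, b =>
    have : Decidable (∃ k, b k = true) := Classical.propDecidable _
    if h : ∃ k, b k = true then
      ((Nat.find h + 1 : ℕ) : ℕ∞) +
        max (HWU ((n+1)/2) (oddSeq (fun i => b (i + Nat.find h + 1))))
            (HWU (n/2) (evenSeq (fun i => b (i + Nat.find h + 1))))
    else ⊤
decreasing_by all_goals omega

lemma hgp_le_self (n : ℕ) : ∀ b, HGP n b ≤ n := by
  induction n using Nat.strong_induction_on with
  | _ n ih =>
    intro b
    match n with
    | 0 => simp [HGP]
    | n+1 =>
      rw [HGP]
      split
      · have h1 := ih ((n+1)/2) (by omega) (oddSeq (tailSeq b))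
        have h2 := ih (n/2) (by omega) (evenSeq (tailSeq b))
        omega
      · have := ih n (by omega) (tailSeq b)
        omega

lemma hgp_mono (n : ℕ) : ∀ m b, m ≤ n → HGP m b ≤ HGP n b := by
  induction n using Nat.strong_induction_on with
  | _ n ih =>
    intro m b hmn
    match m, n with
    | 0, n => simp [HGP]
    | m+1, n+1 =>
      rw [HGP, HGP]
      split
      · have h1 := ih ((n+1)/2) (by omega) ((m+1)/2) (oddSeq (tailSeq b)) (by omega)
        have h2 := ih (n/2) (by omega) (m/2) (evenSeq (tailSeq b)) (by omega)
        omega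
      · have := ih n (by omega) m (tailSeq b) (by omega)
        omega

lemma hgp_prefix (k : ℕ) : ∀ m b, (∀ i, i < k → b i = false) →
    HGP (k + m) b = k + HGP m (fun i => b (i + k)) := by
  induction k with
  | zero => intro m b _; simp
  | succ k ih =>
    intro m b hb
    have h0 : b 0 = false := hb 0 (by omega)
    have : k + 1 + m = (k + m) + 1 := by omega
    rw [this, HGP]
    rw [if_neg (by simp [h0] : ¬ b 0 = true)]
    rw [ih m (tailSeq b) (fun i hi => hb (i+1) (by omega))]
    have : (fun i => tailSeq b (i + k)) = (fun i => b (i + (k+1))) := by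
      funext i; rfl
    rw [this]; omega

/-- Coupling of the GP and WU models: on every failure pattern the GP execution
is at least as fast as the WU execution. -/
theorem hgp_le_hwu (n : ℕ) (b : ℕ → Bool) :
    (HGP n b : ℕ∞) ≤ HWU n b := by
  induction n using Nat.strong_induction_on generalizing b with
  | _ n ih =>
    match n with
    | 0 => simp [HGP, HWU]
    | n+1 =>
      rw [HWU]
      by_cases h : ∃ k, b k = true
      · rw [dif_pos h]
        set k := Nat.find h with hk
        set b' : ℕ → Bool := fun i => b (i + k + 1) with hb'
        have hbk : b k = true := Nat.find_spec h
        have hfalse : ∀ i, i < k → b i = false := fun i hi => by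
          have := Nat.find_min h hi; simpa using this
        by_cases hkn : k ≤ n
        · have hsplit : n + 1 = k + ((n - k) + 1) := by omega
          have hbt : tailSeq (fun i => b (i + k)) = b' := by
            funext i; simp only [tailSeq, hb']; congr 1; omega
          set A := HGP ((n-k+1)/2) (oddSeq b') with hA
          set B := HGP ((n-k)/2) (evenSeq b') with hB
          have eG : HGP (n+1) b = k + (1 + max A B) := by
            conv_lhs => rw [hsplit]
            rw [hgp_prefix k ((n-k)+1) b hfalse]
            rw [HGP, if_pos (show (fun i => b (i+k)) 0 = true by simpa using hbk), hbt]
          rw [eG]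
          have HA : ((A : ℕ) : ℕ∞) ≤ HWU ((n+1)/2) (oddSeq b') :=
            le_trans (Nat.cast_le.mpr (hgp_mono ((n+1)/2) _ _ (by omega)))
              (ih ((n+1)/2) (by omega) _)
          have HB : ((B : ℕ) : ℕ∞) ≤ HWU (n/2) (evenSeq b') :=
            le_trans (Nat.cast_le.mpr (hgp_mono (n/2) _ _ (by omega)))
              (ih (n/2) (by omega) _)
          have hmax : ((max A B : ℕ) : ℕ∞) ≤
              max (HWU ((n+1)/2) (oddSeq b')) (HWU (n/2) (evenSeq b')) := by
            rcases max_cases A B with ⟨h1, _⟩ | ⟨h1, _⟩ <;> rw [h1]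
            · exact le_trans HA (le_max_left _ _)
            · exact le_trans HB (le_max_right _ _)
          calc ((k + (1 + max A B) : ℕ) : ℕ∞)
              = ((k+1 : ℕ) : ℕ∞) + ((max A B : ℕ) : ℕ∞) := by push_cast; ring
            _ ≤ _ := add_le_add_right hmax _
        · calc ((HGP (n+1) b : ℕ) : ℕ∞) ≤ ((k+1 : ℕ) : ℕ∞) := by
                exact_mod_cast le_trans (hgp_le_self (n+1) b) (by omega)
            _ ≤ _ := self_le_add_right _ _
      · rw [dif_neg h]; exact le_top
end

section
/- Worst-case adversarial bound for the GP algorithm: for all m f : ℕ with f ≤ m and every b : ℕ → Bool such that the set {i | b i = false} has at most f elements, HGP m b ≤ f + ⌈log₂ (m + 1 − f)⌉ (where ⌈log₂ x⌉ = Nat.clog 2 x). That is, with at most f initial node failures the GP algorithm informing m initially uninformed processors terminates within f + ⌈log₂ (m+1−f)⌉ rounds. -/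
lemma hgp_le : ∀ m b, HGP m b ≤ m := by
  intro m
  induction m using Nat.strong_induction_on with
  | _ m ih =>
    intro b
    match m with
    | 0 => simp [HGP]
    | n+1 =>
      rw [HGP]
      split
      · have h1 := ih ((n+1)/2) (by omega) (oddSeq (tailSeq b))
        have h2 := ih (n/2) (by omega) (evenSeq (tailSeq b))
        omega
      · have := ih n (by omega) (tailSeq b)
        omega

lemma encard_comp_le (b : ℕ → Bool) (g : ℕ → ℕ) (hg : Function.Injective g) :
    {i | b (g i) = false}.encard ≤ {i | b i = false}.encard := by
  calc {i | b (g i) = false}.encard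
      = (g '' {i | b (g i) = false}).encard := (Set.InjOn.encard_image hg.injOn).symm
    _ ≤ {i | b i = false}.encard := by
        apply Set.encard_mono
        rintro x ⟨i, hi, rfl⟩
        exact hi

/-- With at most `f` initial node failures, the GP algorithm informing `m`
initially uninformed processors terminates within `f + ⌈log₂ (m+1-f)⌉` rounds. -/
theorem hgp_adversarial_bound (m f : ℕ) (hfm : f ≤ m) (b : ℕ → Bool)
    (hb : {i | b i = false}.encard ≤ f) :
    HGP m b ≤ f + Nat.clog 2 (m + 1 - f) := by
  induction m using Nat.strong_induction_on generalizing f b with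
  | _ m ih =>
    match m with
    | 0 => simp [HGP]
    | n+1 =>
      rw [HGP]
      by_cases h0 : b 0 = true
      · rw [if_pos h0]
        have hodd : {i | oddSeq (tailSeq b) i = false}.encard ≤ (f : ℕ∞) := by
          refine le_trans (le_of_eq ?_) (le_trans (encard_comp_le b (fun i => 2*i+1)
            (fun x y h => by dsimp at h; omega)) hb)
          rfl
        have heven : {i | evenSeq (tailSeq b) i = false}.encard ≤ (f : ℕ∞) := by
          refine le_trans (le_of_eq ?_) (le_trans (encard_comp_le b (fun i => 2*i+2)
            (fun x y h => by dsimp at h; omega)) hb)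
          rfl
        by_cases hf : f ≤ n/2
        · have H1 := ih ((n+1)/2) (by omega) f (by omega) _ hodd
          have H2 := ih (n/2) (by omega) f (by omega) _ heven
          have hstep : Nat.clog 2 (n+1+1-f) = Nat.clog 2 ((n+1+1-f+2-1)/2) + 1 :=
            Nat.clog_of_two_le (by norm_num) (by omega)
          have m1 : (n+1)/2 + 1 - f ≤ (n+1+1-f+2-1)/2 := by omega
          have m2 : n/2 + 1 - f ≤ (n+1+1-f+2-1)/2 := by omega
          have c1 := Nat.clog_mono_right 2 m1
          have c2 := Nat.clog_mono_right 2 m2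
          omega
        · have A1 := hgp_le ((n+1)/2) (oddSeq (tailSeq b))
          have A2 := hgp_le (n/2) (evenSeq (tailSeq b))
          by_cases hfn : f ≤ n
          · have hc : 0 < Nat.clog 2 (n+1+1-f) := Nat.clog_pos (by norm_num) (by omega)
            omega
          · omega
      · rw [if_neg h0]
        have h0' : (0 : ℕ) ∈ {i | b i = false} := by
          simp only [Set.mem_setOf_eq, Bool.not_eq_true] at h0 ⊢; exact h0
        have hf1 : 1 ≤ f := by
          have := Set.one_le_encard_iff_nonempty.mpr ⟨0, h0'⟩
          have := le_trans this hb
          exact_mod_cast this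
        have hsub : insert 0 ((· + 1) '' {i | tailSeq b i = false}) ⊆ {i | b i = false} := by
          rintro x (rfl | ⟨i, hi, rfl⟩)
          · exact h0'
          · exact hi
        have hins : (insert 0 ((· + 1) '' {i | tailSeq b i = false})).encard
            = ((· + 1) '' {i | tailSeq b i = false}).encard + 1 := by
          rw [Set.encard_insert_of_notMem (by rintro ⟨i, _, h⟩; simp at h)]
        have himg : ((· + 1) '' {i | tailSeq b i = false}).encard
            = {i | tailSeq b i = false}.encard :=
          Set.InjOn.encard_image (fun x _ y _ h => by omega)
        have hkey : {i | tailSeq b i = false}.encard + 1 ≤ (f : ℕ∞) := by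
          calc {i | tailSeq b i = false}.encard + 1
              = (insert 0 ((· + 1) '' {i | tailSeq b i = false})).encard := by
                rw [hins, himg]
            _ ≤ {i | b i = false}.encard := Set.encard_mono hsub
            _ ≤ (f : ℕ∞) := hb
        have htail : {i | tailSeq b i = false}.encard ≤ ((f - 1 : ℕ) : ℕ∞) := by
          rcases eq_or_ne ({i | tailSeq b i = false}.encard) ⊤ with h | h
          · rw [h] at hkey; simp at hkey
          · lift {i | tailSeq b i = false}.encard to ℕ using h with k hk
            rw [← Nat.cast_one, ← Nat.cast_add, Nat.cast_le] at hkey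
            exact_mod_cast by omega
        have H := ih n (by omega) (f - 1) (by omega) (tailSeq b) htail
        have harg : n + 1 - (f - 1) = n + 1 + 1 - f := by omega
        rw [harg] at H
        omega
end

section
/- Tightness of the worst-case bound for the GP algorithm: for all m f : ℕ with f ≤ m, letting b : ℕ → Bool be the failure pattern with b i = false for i < f and b i = true for i ≥ f (i.e., the first f requested processors are failed), one has HGP m b = f + ⌈log₂ (m + 1 − f)⌉ (where ⌈log₂ x⌉ = Nat.clog 2 x). -/
lemma HGP_true : ∀ n, HGP n (fun _ => true) = Nat.clog 2 (n+1) := by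
  intro n
  induction n using Nat.strong_induction_on with
  | _ n ih =>
    match n with
    | 0 => simp [HGP]
    | n+1 =>
      rw [HGP]
      have h1 : oddSeq (tailSeq (fun _ => true)) = (fun _ => true) := rfl
      have h2 : evenSeq (tailSeq (fun _ => true)) = (fun _ => true) := rfl
      rw [if_pos rfl, h1, h2, ih ((n+1)/2) (by omega), ih (n/2) (by omega)]
      have hmax : max (Nat.clog 2 ((n+1)/2 + 1)) (Nat.clog 2 (n/2 + 1))
          = Nat.clog 2 ((n+1)/2 + 1) :=
        max_eq_left (Nat.clog_mono_right 2 (by omega))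
      rw [hmax, Nat.clog_of_two_le (by norm_num) (by omega : 2 ≤ n + 1 + 1)]
      have : (n + 1 + 1 + 2 - 1) / 2 = (n+1)/2 + 1 := by omega
      rw [this]
      omega

/-- Tightness of the worst-case bound for the GP algorithm: if exactly the
first `f` requested processors are failed, the runtime is exactly
`f + ⌈log₂ (m+1-f)⌉`. -/
theorem hgp_adversarial_bound_tight (m f : ℕ) (hfm : f ≤ m) :
    HGP m (fun i => decide (f ≤ i)) = f + Nat.clog 2 (m + 1 - f) := by
  induction f generalizing m with
  | zero =>
    simpa using HGP_true m
  | succ f ih =>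
    obtain ⟨m', rfl⟩ : ∃ m', m = m' + 1 := ⟨m - 1, by omega⟩
    rw [HGP, if_neg (by simp)]
    have ht : tailSeq (fun i => decide (f + 1 ≤ i)) = (fun i => decide (f ≤ i)) := by
      funext i; simp [tailSeq]
    rw [ht, ih m' (by omega), show m' + 1 + 1 - (f + 1) = m' + 1 - f from by omega]
    omega
end

section
/- Runtime of the GP algorithm under random failures: let n ≥ 2, let c > 1 be a real constant, and let p ∈ (0,1). Then μ_p { b : ℕ → Bool | (c/p)·(⌈log₂(n−1)⌉ + 1) < (HGP (n−1) b : ℝ) } ≤ n · exp( − ((c−1)²/(2c)) · (⌈log₂(n−1)⌉ − 1) ). That is, when each of the n−1 non-start processors fails independently with probability 1−p, the execution time of the GP algorithm is at most (c/p)(⌈log₂(n−1)⌉+1) with probability at least 1 − n·exp(−((c−1)²/(2c))(⌈log₂(n−1)⌉−1)). -/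
open MeasureTheory

/-! ### Auxiliary combinatorial definitions -/

def stepF : Option Bool → ℕ → ℕ
  | none, i => i + 1
  | some false, i => 2*i + 1
  | some true, i => 2*i + 2

def idx : List (Option Bool) → ℕ
  | [] => 0
  | a :: w => stepF a (idx w)

def mStep (m : ℕ) : Option Bool → ℕ
  | none => m - 1
  | some false => m / 2
  | some true => (m-1) / 2

def bStep (b : ℕ → Bool) : Option Bool → (ℕ → Bool)
  | none => tailSeq b
  | some false => oddSeq (tailSeq b)
  | some true => evenSeq (tailSeq b)

def mWord : ℕ → List (Option Bool) → ℕ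
  | m, [] => m
  | m, a :: w => mWord (mStep m a) w

def bWord : (ℕ → Bool) → List (Option Bool) → (ℕ → Bool)
  | b, [] => b
  | b, a :: w => bWord (bStep b a) w

def cnt (w : List (Option Bool)) : ℕ := w.countP Option.isSome

lemma stepF_lt (a : Option Bool) {x y : ℕ} (h : x < y) : stepF a x < stepF a y := by
  rcases a with _ | (_|_) <;> simp [stepF] <;> omega

lemma idx_lt_append (u : List (Option Bool)) (a : Option Bool) : idx u < idx (u ++ [a]) := by
  induction u with
  | nil => rcases a with _ | (_|_) <;> simp [idx, stepF]
  | cons a0 u ih => simpa [idx] using stepF_lt a0 ih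

lemma idx_take_lt {w : List (Option Bool)} {j j' : ℕ} (h : j < j') (h' : j' ≤ w.length) :
    idx (w.take j) < idx (w.take j') := by
  induction j' with
  | zero => omega
  | succ k ih =>
    have hk : k < w.length := by omega
    have hlast : idx (w.take k) < idx (w.take (k+1)) := by
      rw [List.take_succ]
      have : w[k]? = some (w[k]) := List.getElem?_eq_getElem hk
      rw [this]
      exact idx_lt_append _ _
    rcases Nat.lt_or_ge j k with hj | hj
    · exact lt_trans (ih hj (by omega)) hlast
    · have : j = k := by omega
      subst this; exact hlast

lemma mWord_append (m : ℕ) (u v : List (Option Bool)) :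
    mWord m (u ++ v) = mWord (mWord m u) v := by
  induction u generalizing m with
  | nil => rfl
  | cons a u ih => simp [mWord, ih]

lemma shrink : ∀ (w : List (Option Bool)) (m : ℕ), 2 ^ cnt w * mWord m w ≤ m := by
  intro w
  induction w with
  | nil => intro m; simp [cnt, mWord]
  | cons a w ih =>
    intro m
    rcases a with _ | (_|_)
    · have := ih (m - 1)
      simp only [cnt, List.countP_cons, mWord, mStep] at *
      simp only [Option.isSome_none, if_false, cond_false, Bool.false_eq_true, add_zero] at *
      omega
    · have := ih (m / 2)
      simp only [cnt, List.countP_cons, mWord, mStep] at *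
      simp only [Option.isSome_some, if_true, cond_true, add_zero] at *
      rw [pow_succ]
      calc 2 ^ List.countP Option.isSome w * 2 * mWord (m/2) w
          = 2 * (2 ^ List.countP Option.isSome w * mWord (m/2) w) := by ring
        _ ≤ 2 * (m/2) := by omega
        _ ≤ m := by omega
    · have := ih ((m-1)/2)
      simp only [cnt, List.countP_cons, mWord, mStep] at *
      simp only [Option.isSome_some, if_true, cond_true, add_zero] at *
      rw [pow_succ]
      calc 2 ^ List.countP Option.isSome w * 2 * mWord ((m-1)/2) w
          = 2 * (2 ^ List.countP Option.isSome w * mWord ((m-1)/2) w) := by ring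
        _ ≤ 2 * ((m-1)/2) := by omega
        _ ≤ m := by omega

lemma HGP_pos {m : ℕ} {b : ℕ → Bool} (h : 0 < HGP m b) : 1 ≤ m := by
  cases m with
  | zero => simp [HGP] at h
  | succ k => omega

lemma exists_word : ∀ (T m : ℕ) (b : ℕ → Bool), T < HGP m b →
    ∃ w : List (Option Bool), w.length = T ∧
      (∀ j, j < T → b (idx (w.take j)) = (w.getD j none).isSome) ∧
      0 < HGP (mWord m w) (bWord b w) := by
  intro T
  induction T with
  | zero => intro m b h; exact ⟨[], rfl, by omega, h⟩
  | succ T ih =>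
    intro m b h
    match m with
    | 0 => simp [HGP] at h
    | m'+1 =>
      rw [HGP] at h
      by_cases hb : b 0 = true
      · rw [if_pos hb] at h
        rcases lt_max_iff.1 (by omega :
            T < max (HGP ((m'+1)/2) (oddSeq (tailSeq b))) (HGP (m'/2) (evenSeq (tailSeq b)))) with hA | hB
        · obtain ⟨w, hlen, hcons, hpos⟩ := ih ((m'+1)/2) (oddSeq (tailSeq b)) hA
          refine ⟨some false :: w, by simp [hlen], ?_, ?_⟩
          · intro j hj
            cases j with
            | zero => simpa [idx] using hb
            | succ j => exact hcons j (by omega)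
          · exact hpos
        · obtain ⟨w, hlen, hcons, hpos⟩ := ih (m'/2) (evenSeq (tailSeq b)) hB
          refine ⟨some true :: w, by simp [hlen], ?_, ?_⟩
          · intro j hj
            cases j with
            | zero => simpa [idx] using hb
            | succ j => exact hcons j (by omega)
          · exact hpos
      · rw [if_neg hb] at h
        obtain ⟨w, hlen, hcons, hpos⟩ := ih m' (tailSeq b) (by omega)
        refine ⟨none :: w, by simp [hlen], ?_, ?_⟩
        · intro j hj
          cases j with
          | zero =>
            have : b 0 = false := by revert hb; cases b 0 <;> simp
            simpa [idx] using this
          | succ j => exact hcons j (by omega)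
        · exact hpos

/-! ### Analytic lemmas -/

lemma exp_neg_le_quad {t : ℝ} (ht : 0 ≤ t) : Real.exp (-t) ≤ 1 - t + t^2/2 := by
  have h1 : 1 + t + t^2/2 ≤ Real.exp t := by
    have := Real.sum_le_exp_of_nonneg ht 3
    simp [Finset.sum_range_succ, Nat.factorial] at this
    nlinarith [this]
  have hpos : (0:ℝ) < 1 + t + t^2/2 := by nlinarith
  have h2 : Real.exp (-t) = 1 / Real.exp t := by rw [Real.exp_neg]; ring
  rw [h2]
  refine (one_div_le_one_div_of_le hpos h1).trans ?_
  rw [div_le_iff₀ hpos]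
  nlinarith [sq_nonneg t, sq_nonneg (t^2)]

lemma list_prod_if (x y : ℝ) : ∀ (w : List (Option Bool)),
    (w.map (fun a => if a.isSome then x else y)).prod
      = x ^ (w.countP Option.isSome) * y ^ (w.length - w.countP Option.isSome) := by
  intro w
  induction w with
  | nil => simp
  | cons a w ih =>
    have hle : w.countP Option.isSome ≤ w.length := List.countP_le_length
    rcases a with _ | s
    · simp only [List.map_cons, List.prod_cons, List.countP_cons, List.length_cons,
        Option.isSome_none, cond_false, Bool.false_eq_true, if_false, add_zero, ih]
      have : w.length + 1 - w.countP Option.isSome = (w.length - w.countP Option.isSome) + 1 := by omega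
      rw [this, pow_succ]; ring
    · simp only [List.map_cons, List.prod_cons, List.countP_cons, List.length_cons,
        Option.isSome_some, cond_true, if_true, ih]
      have : w.length + 1 - (w.countP Option.isSome + 1) = w.length - w.countP Option.isSome := by omega
      rw [this, pow_succ]; ring

lemma fin_prod_if (x y : ℝ) (N : ℕ) (σ : Fin N → Option Bool) :
    (∏ j : Fin N, (if (σ j).isSome then x else y))
      = x ^ cnt (List.ofFn σ) * y ^ (N - cnt (List.ofFn σ)) := by
  have h1 : (∏ j : Fin N, (if (σ j).isSome then x else y))
      = (List.ofFn (fun j => if (σ j).isSome then x else y)).prod := by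
    rw [List.prod_ofFn]
  have h2 : List.ofFn (fun j => if (σ j).isSome then x else y)
      = (List.ofFn σ).map (fun a => if a.isSome then x else y) := by
    rw [List.map_ofFn]; rfl
  rw [h1, h2, list_prod_if]
  simp [cnt, List.length_ofFn]

lemma sum_pow_bound (T' K : ℕ) (p q t : ℝ) (hp : 0 ≤ p) (hq : 0 ≤ q) (ht : 0 ≤ t) :
    ∑ σ ∈ Finset.univ.filter (fun σ : Fin T' → Option Bool => cnt (List.ofFn σ) ≤ K),
        p ^ cnt (List.ofFn σ) * q ^ (T' - cnt (List.ofFn σ))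
      ≤ Real.exp (t*K) * (q + 2*(p*Real.exp (-t)))^T' := by
  classical
  set g : Option Bool → ℝ := fun a => if a.isSome then p * Real.exp (-t) else q with hg
  have step1 : ∀ σ ∈ Finset.univ.filter (fun σ : Fin T' → Option Bool => cnt (List.ofFn σ) ≤ K),
      p ^ cnt (List.ofFn σ) * q ^ (T' - cnt (List.ofFn σ))
        ≤ Real.exp (t*K) * ∏ j : Fin T', g (σ j) := by
    intro σ hσ
    have hk : cnt (List.ofFn σ) ≤ K := (Finset.mem_filter.1 hσ).2
    set k := cnt (List.ofFn σ)
    rw [fin_prod_if]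
    have he : (p * Real.exp (-t)) ^ k = p ^ k * Real.exp (-(t*k)) := by
      rw [mul_pow, ← Real.exp_nat_mul]; ring_nf
    rw [he]
    have key : (1:ℝ) ≤ Real.exp (t*K) * Real.exp (-(t*k)) := by
      rw [← Real.exp_add]
      apply Real.one_le_exp
      have : (k:ℝ) ≤ (K:ℝ) := by exact_mod_cast hk
      nlinarith
    have hnn : 0 ≤ p ^ k * q ^ (T' - k) := by positivity
    nlinarith [hnn, key, mul_le_mul_of_nonneg_left key hnn]
  have step2 : ∑ σ ∈ Finset.univ.filter (fun σ : Fin T' → Option Bool => cnt (List.ofFn σ) ≤ K),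
        p ^ cnt (List.ofFn σ) * q ^ (T' - cnt (List.ofFn σ))
      ≤ ∑ σ ∈ Finset.univ.filter (fun σ : Fin T' → Option Bool => cnt (List.ofFn σ) ≤ K),
        Real.exp (t*K) * ∏ j : Fin T', g (σ j) := Finset.sum_le_sum step1
  have hgnn : ∀ a, 0 ≤ g a := by
    intro a; rw [hg]; dsimp only; split
    · positivity
    · exact hq
  have step3 : ∑ σ ∈ Finset.univ.filter (fun σ : Fin T' → Option Bool => cnt (List.ofFn σ) ≤ K),
        Real.exp (t*K) * ∏ j : Fin T', g (σ j)
      ≤ ∑ σ : Fin T' → Option Bool, Real.exp (t*K) * ∏ j : Fin T', g (σ j) := by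
    apply Finset.sum_le_sum_of_subset_of_nonneg (Finset.filter_subset _ _)
    intro σ _ _
    have : 0 ≤ ∏ j : Fin T', g (σ j) := Finset.prod_nonneg fun j _ => hgnn _
    positivity
  have step4 : ∑ σ : Fin T' → Option Bool, Real.exp (t*K) * ∏ j : Fin T', g (σ j)
      = Real.exp (t*K) * (q + 2*(p*Real.exp (-t)))^T' := by
    rw [← Finset.mul_sum]
    congr 1
    have := Finset.prod_univ_sum (fun _ : Fin T' => (Finset.univ : Finset (Option Bool)))
      (fun _ a => g a)
    rw [Fintype.piFinset_univ] at this
    have hsum : ∑ a : Option Bool, g a = q + 2*(p*Real.exp (-t)) := by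
      rw [Fintype.sum_option]
      simp [hg, Fintype.sum_bool]
    rw [← this, Finset.prod_congr rfl (fun j _ => hsum), Finset.prod_const,
      Finset.card_univ, Fintype.card_fin]
  calc _ ≤ _ := step2
    _ ≤ _ := step3
    _ = _ := step4

lemma chain (c p : ℝ) (hc : 1 < c) (hp0 : 0 < p) (hp1 : p < 1) (K T' : ℕ)
    (hK : 1 ≤ K) (hcK : c * K ≤ p * T') :
    Real.exp (((p*T' - K)/(p*T') + Real.log 2) * K)
        * ((1-p) + 2*(p*Real.exp (-((p*T' - K)/(p*T') + Real.log 2))))^T'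
      ≤ 2^K * Real.exp (-((c-1)^2/(2*c)) * K) := by
  set μr : ℝ := p * T' with hμr
  have hK1 : (1:ℝ) ≤ K := by exact_mod_cast hK
  have hKμ : (K:ℝ) ≤ μr := by nlinarith
  have hμpos : 0 < μr := by nlinarith
  set t0 : ℝ := (μr - K)/μr with ht0def
  have ht0 : 0 ≤ t0 := by
    apply div_nonneg (by linarith) (le_of_lt hμpos)
  have h2l : Real.exp (-Real.log 2) = 1/2 := by
    rw [Real.exp_neg, Real.exp_log (by norm_num : (0:ℝ) < 2)]
    norm_num
  have hexp2 : Real.exp (-(t0 + Real.log 2)) = Real.exp (-t0) * (1/2) := by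
    rw [neg_add, Real.exp_add, h2l]
  have hbase : (1-p) + 2*(p*Real.exp (-(t0 + Real.log 2))) = 1 + p*(Real.exp (-t0) - 1) := by
    rw [hexp2]; ring
  have hbasenn : 0 ≤ 1 + p*(Real.exp (-t0) - 1) := by
    nlinarith [Real.exp_pos (-t0)]
  have hb2 : 1 + p*(Real.exp (-t0) - 1) ≤ Real.exp (p*(Real.exp (-t0) - 1)) := by
    have := Real.add_one_le_exp (p*(Real.exp (-t0) - 1))
    linarith
  have hpow : ((1-p) + 2*(p*Real.exp (-(t0 + Real.log 2))))^T'
      ≤ Real.exp (μr * (Real.exp (-t0) - 1)) := by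
    rw [hbase]
    calc (1 + p*(Real.exp (-t0) - 1))^T' ≤ (Real.exp (p*(Real.exp (-t0) - 1)))^T' :=
          pow_le_pow_left₀ hbasenn hb2 T'
      _ = Real.exp ((T':ℝ) * (p*(Real.exp (-t0) - 1))) := by rw [Real.exp_nat_mul]
      _ = Real.exp (μr * (Real.exp (-t0) - 1)) := by rw [hμr]; ring_nf
  have hsplit : Real.exp ((t0 + Real.log 2) * K) = Real.exp (t0 * K) * 2^K := by
    rw [show (t0 + Real.log 2) * K = t0*K + (K:ℝ)*Real.log 2 by ring, Real.exp_add,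
      Real.exp_nat_mul, Real.exp_log (by norm_num : (0:ℝ) < 2)]
  have hquad : μr * (Real.exp (-t0) - 1) ≤ μr * (-t0 + t0^2/2) := by
    have := exp_neg_le_quad ht0
    nlinarith
  have halg : t0 * K + μr * (-t0 + t0^2/2) = -((μr - K)^2/(2*μr)) := by
    rw [ht0def]; field_simp; ring
  have hfinal : -((μr - K)^2/(2*μr)) ≤ -((c-1)^2/(2*c)) * K := by
    have h1 : 0 ≤ μr - c*K := by linarith
    have h2 : 0 ≤ c*μr - K := by nlinarith
    have key : ((c-1)^2/(2*c)) * K ≤ (μr - K)^2/(2*μr) := by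
      rw [div_mul_eq_mul_div, div_le_div_iff₀ (by linarith) (by linarith)]
      nlinarith [mul_nonneg h1 h2]
    linarith
  calc Real.exp ((t0 + Real.log 2) * K) * ((1-p) + 2*(p*Real.exp (-(t0 + Real.log 2))))^T'
      ≤ Real.exp ((t0 + Real.log 2) * K) * Real.exp (μr * (Real.exp (-t0) - 1)) := by
        apply mul_le_mul_of_nonneg_left hpow (le_of_lt (Real.exp_pos _))
    _ = Real.exp (t0 * K) * 2^K * Real.exp (μr * (Real.exp (-t0) - 1)) := by rw [hsplit]
    _ = 2^K * Real.exp (t0 * K + μr * (Real.exp (-t0) - 1)) := by rw [Real.exp_add]; ring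
    _ ≤ 2^K * Real.exp (t0 * K + μr * (-t0 + t0^2/2)) := by
        apply mul_le_mul_of_nonneg_left _ (by positivity)
        apply Real.exp_le_exp.2; linarith
    _ = 2^K * Real.exp (-((μr - K)^2/(2*μr))) := by rw [halg]
    _ ≤ 2^K * Real.exp (-((c-1)^2/(2*c)) * K) := by
        apply mul_le_mul_of_nonneg_left _ (by positivity)
        exact Real.exp_le_exp.2 hfinal

/-! ### Cylinder sets -/

lemma ofFn_getD (l : List (Option Bool)) (N : ℕ) (h : l.length = N) :
    List.ofFn (fun j : Fin N => l.getD j none) = l := by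
  apply List.ext_getElem (by simp [h])
  intro i h1 h2
  simp [List.getD_eq_getElem?_getD, List.getElem?_eq_getElem h2]

lemma getD_ofFn {N : ℕ} (σ : Fin N → Option Bool) (j : Fin N) :
    (List.ofFn σ).getD j none = σ j := by
  simp [List.getD_eq_getElem?_getD, List.getElem?_ofFn, List.ofFnNthVal, j.isLt]

lemma cyl_measure (p : ℝ) (μ : Measure (ℕ → Bool))
    (hμ : ∀ (s : Finset ℕ) (v : ℕ → Bool),
      μ {b | ∀ i ∈ s, b i = v i} =
        ∏ i ∈ s, (if v i then ENNReal.ofReal p else ENNReal.ofReal (1 - p)))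
    (T : ℕ) (e : ℕ → ℕ) (he : ∀ i j, i < j → j < T → e i < e j)
    (cb : ℕ → Bool) :
    μ {b | ∀ j, j < T → b (e j) = cb j}
      = ∏ j ∈ Finset.range T, (if cb j then ENNReal.ofReal p else ENNReal.ofReal (1-p)) := by
  classical
  set v : ℕ → Bool := fun i => (List.range T).any (fun j => (e j == i) && cb j) with hv
  have hinj : ∀ x ∈ Finset.range T, ∀ y ∈ Finset.range T, e x = e y → x = y := by
    intro x hx y hy hxy
    rcases lt_trichotomy x y with h | h | h
    · exact absurd hxy (by have := he x y h (Finset.mem_range.1 hy); omega)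
    · exact h
    · exact absurd hxy (by have := he y x h (Finset.mem_range.1 hx); omega)
  have hve : ∀ j, j < T → v (e j) = cb j := by
    intro j hj
    rcases hcb : cb j with _ | _
    · rw [hv]
      simp only [List.any_eq_true, List.mem_range, Bool.and_eq_true, beq_iff_eq]
      rw [Bool.eq_false_iff]
      intro hcontra
      rw [List.any_eq_true] at hcontra
      obtain ⟨j', hj', hb⟩ := hcontra
      rw [List.mem_range] at hj'
      simp only [Bool.and_eq_true, beq_iff_eq] at hb
      obtain ⟨h1, h2⟩ := hb
      have : j' = j := hinj j' (Finset.mem_range.2 hj') j (Finset.mem_range.2 hj) h1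
      rw [this] at h2; rw [hcb] at h2; exact Bool.false_ne_true h2
    · rw [hv]
      rw [List.any_eq_true]
      refine ⟨j, List.mem_range.2 hj, ?_⟩
      simp [hcb]
  have hset : {b : ℕ → Bool | ∀ j, j < T → b (e j) = cb j}
      = {b : ℕ → Bool | ∀ i ∈ (Finset.range T).image e, b i = v i} := by
    ext b
    simp only [Set.mem_setOf_eq, Finset.mem_image]
    constructor
    · rintro hb i ⟨j, hj, rfl⟩
      rw [hb j (Finset.mem_range.1 hj), hve j (Finset.mem_range.1 hj)]
    · intro hb j hj
      rw [hb (e j) ⟨j, Finset.mem_range.2 hj, rfl⟩, hve j hj]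
  rw [hset, hμ, Finset.prod_image hinj]
  apply Finset.prod_congr rfl
  intro j hj
  rw [hve j (Finset.mem_range.1 hj)]

set_option maxHeartbeats 1000000 in
/-- Runtime of the GP algorithm under random failures: if each of the requests
succeeds independently with probability `p` (i.e. `μ` is the i.i.d. Bernoulli(p)
product measure on `ℕ → Bool`), then the probability that the GP algorithm on
`n` processors (one informed, `n-1` uninformed) runs longer than
`(c/p)(⌈log₂(n-1)⌉+1)` rounds is at most
`n · exp(-((c-1)²/(2c))(⌈log₂(n-1)⌉-1))`. -/
theorem gp_random_failures (n : ℕ) (hn : 2 ≤ n) (c : ℝ) (hc : 1 < c)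
    (p : ℝ) (hp0 : 0 < p) (hp1 : p < 1)
    (μ : Measure (ℕ → Bool)) [IsProbabilityMeasure μ]
    (hμ : ∀ (s : Finset ℕ) (v : ℕ → Bool),
      μ {b | ∀ i ∈ s, b i = v i} =
        ∏ i ∈ s, (if v i then ENNReal.ofReal p else ENNReal.ofReal (1 - p))) :
    μ {b | c / p * ((Nat.clog 2 (n-1) : ℝ) + 1) < (HGP (n-1) b : ℝ)} ≤
      ENNReal.ofReal ((n : ℝ) *
        Real.exp (-((c-1)^2 / (2*c)) * ((Nat.clog 2 (n-1) : ℝ) - 1))) := by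
  classical
  set m : ℕ := n - 1 with hm
  set L : ℕ := Nat.clog 2 m with hLdef
  have hKcnn : (0:ℝ) ≤ (c-1)^2 / (2*c) := by
    apply div_nonneg (sq_nonneg _) (by linarith)
  by_cases hL : L ≤ 1
  · -- trivial case : RHS ≥ 1
    have hL1 : (L:ℝ) - 1 ≤ 0 := by
      have : (L:ℝ) ≤ 1 := by exact_mod_cast hL
      linarith
    have he1 : (1:ℝ) ≤ Real.exp (-((c-1)^2 / (2*c)) * ((L:ℝ) - 1)) :=
      Real.one_le_exp (by nlinarith)
    have hn2 : (2:ℝ) ≤ (n:ℝ) := by exact_mod_cast hn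
    have h1 : (1:ℝ) ≤ (n:ℝ) * Real.exp (-((c-1)^2 / (2*c)) * ((L:ℝ) - 1)) := by nlinarith
    calc μ _ ≤ 1 := prob_le_one
      _ = ENNReal.ofReal 1 := ENNReal.ofReal_one.symm
      _ ≤ _ := ENNReal.ofReal_le_ofReal h1
  · push_neg at hL
    have hm3 : 3 ≤ m := by
      by_contra hcon
      push_neg at hcon
      have h2 : Nat.clog 2 m ≤ Nat.clog 2 2 := Nat.clog_mono_right 2 (by omega)
      have h3 : Nat.clog 2 2 = 1 := by
        have := Nat.clog_pow 2 1 (by norm_num)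
        simpa using this
      omega
    set K : ℕ := L - 1 with hKdef
    have hK1 : 1 ≤ K := by omega
    have hLK : (K:ℝ) = (L:ℝ) - 1 := by
      have : L = K + 1 := by omega
      rw [this]; push_cast; ring
    set R : ℝ := c / p * ((L:ℝ) + 1) with hRdef
    have hcp : (1:ℝ) < c / p := by
      rw [lt_div_iff₀ hp0]; nlinarith
    have hLpos : (0:ℝ) < (L:ℝ) + 1 := by positivity
    have hR1 : (1:ℝ) ≤ R := by nlinarith
    have hR0 : (0:ℝ) ≤ R := by linarith
    set T : ℕ := ⌊R⌋₊ with hTdef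
    have hT1 : 1 ≤ T := Nat.le_floor (by exact_mod_cast hR1)
    set T' : ℕ := T - 1 with hT'def
    have hT'cast : (T':ℝ) = (T:ℝ) - 1 := by
      have : T = T' + 1 := by omega
      rw [this]; push_cast; ring
    -- the key real quantities
    have hpR : p * R = c * ((L:ℝ) + 1) := by
      rw [hRdef]; field_simp
    have hTR : R < (T:ℝ) + 1 := Nat.lt_floor_add_one R
    have hcK : c * (K:ℝ) ≤ p * (T':ℝ) := by
      have h1 : p * (T':ℝ) = p * (T:ℝ) - p := by rw [hT'cast]; ring
      have h2 : p * R - p < p * (T:ℝ) := by nlinarith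
      rw [hLK]
      nlinarith
    -- event rewriting
    have hev : {b : ℕ → Bool | c / p * ((L:ℝ) + 1) < (HGP m b : ℝ)}
        = {b : ℕ → Bool | T < HGP m b} := by
      ext b
      simp only [Set.mem_setOf_eq]
      rw [hTdef, Nat.floor_lt hR0, hRdef]
    rw [hev]
    -- cylinder machinery
    set F : Finset (Fin T' → Option Bool) :=
      Finset.univ.filter (fun σ => cnt (List.ofFn σ) ≤ K) with hF
    have hsub : {b : ℕ → Bool | T < HGP m b} ⊆
        ⋃ σ ∈ F, {b : ℕ → Bool | ∀ j, j < T' →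
          b (idx ((List.ofFn σ).take j)) = ((List.ofFn σ).getD j none).isSome} := by
      intro b hb
      obtain ⟨w, hlen, hcons, hpos⟩ := exists_word T m b hb
      have h1m : 1 ≤ mWord m w := HGP_pos hpos
      set w' : List (Option Bool) := w.take T' with hw'
      have hlen' : w'.length = T' := by rw [hw', List.length_take]; omega
      obtain ⟨a, ha⟩ : ∃ a, w.drop T' = [a] := by
        apply List.length_eq_one_iff.1
        rw [List.length_drop]; omega
      have heq : mWord m w = mStep (mWord m w') a := by
        conv_lhs => rw [← List.take_append_drop T' w]
        rw [ha, ← hw', mWord_append]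
        rfl
      have h2 : 2 ≤ mWord m w' := by
        rw [heq] at h1m
        rcases a with _ | (_|_) <;> simp [mStep] at h1m <;> omega
      have hcnt : cnt w' ≤ K := by
        have hs := shrink w' m
        have hpow2 : 2 ^ (cnt w' + 1) ≤ m := by
          calc 2 ^ (cnt w' + 1) = 2 ^ (cnt w') * 2 := by rw [pow_succ]
            _ ≤ 2 ^ (cnt w') * mWord m w' := Nat.mul_le_mul_left _ h2
            _ ≤ m := hs
        have h2m : Nat.clog 2 (2 ^ (cnt w' + 1)) ≤ Nat.clog 2 m :=
          Nat.clog_mono_right 2 hpow2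
        rw [Nat.clog_pow 2 _ (by norm_num)] at h2m
        omega
      set σ : Fin T' → Option Bool := fun j => w'.getD j none with hσ
      have hofn : List.ofFn σ = w' := ofFn_getD w' T' hlen'
      apply Set.mem_iUnion₂.2
      refine ⟨σ, ?_, ?_⟩
      · rw [hF, Finset.mem_filter]
        exact ⟨Finset.mem_univ _, by rw [hofn]; exact hcnt⟩
      · intro j hj
        rw [hofn]
        have htakes : w'.take j = w.take j := by
          rw [hw', List.take_take, min_eq_left (by omega)]
        have hgd : w'.getD j none = w.getD j none := by
          rw [hw', List.getD_eq_getElem?_getD, List.getD_eq_getElem?_getD,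
            List.getElem?_take, if_pos hj]
        rw [htakes, hgd]
        exact hcons j (by omega)
    -- bound the measure
    set t : ℝ := (p*(T':ℝ) - (K:ℝ))/(p*(T':ℝ)) + Real.log 2 with htdef
    have hμrpos : 0 < p * (T':ℝ) := by
      have : (0:ℝ) < c * (K:ℝ) := by
        have : (1:ℝ) ≤ (K:ℝ) := by exact_mod_cast hK1
        nlinarith
      linarith
    have ht0 : 0 ≤ (p*(T':ℝ) - (K:ℝ))/(p*(T':ℝ)) := by
      apply div_nonneg _ (le_of_lt hμrpos)
      have : (K:ℝ) ≤ c * (K:ℝ) := by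
        have h1 : (1:ℝ) ≤ (K:ℝ) := by exact_mod_cast hK1
        nlinarith
      linarith
    have htnn : 0 ≤ t := by
      have : (0:ℝ) ≤ Real.log 2 := Real.log_nonneg (by norm_num)
      rw [htdef]; linarith
    have hcylval : ∀ σ : Fin T' → Option Bool,
        μ {b : ℕ → Bool | ∀ j, j < T' →
          b (idx ((List.ofFn σ).take j)) = ((List.ofFn σ).getD j none).isSome}
        = ENNReal.ofReal (p ^ cnt (List.ofFn σ) * (1-p) ^ (T' - cnt (List.ofFn σ))) := by
      intro σ
      rw [cyl_measure p μ hμ T' (fun j => idx ((List.ofFn σ).take j))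
        (fun i j hij hj => idx_take_lt hij (by rw [List.length_ofFn]; omega))
        (fun j => ((List.ofFn σ).getD j none).isSome)]
      have hnn : ∀ j ∈ Finset.range T',
          (0:ℝ) ≤ (if ((List.ofFn σ).getD j none).isSome then p else (1-p)) := by
        intro j _; split
        · exact le_of_lt hp0
        · linarith
      have hsplitite : ∀ j ∈ Finset.range T',
          (if ((List.ofFn σ).getD j none).isSome then ENNReal.ofReal p
            else ENNReal.ofReal (1-p))
          = ENNReal.ofReal (if ((List.ofFn σ).getD j none).isSome then p else (1-p)) := by
        intro j _; split <;> rfl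
      rw [Finset.prod_congr rfl hsplitite, ← ENNReal.ofReal_prod_of_nonneg hnn]
      congr 1
      rw [← Fin.prod_univ_eq_prod_range
        (fun j => if ((List.ofFn σ).getD j none).isSome then p else (1-p)) T']
      have hCj : ∀ j : Fin T',
          (if ((List.ofFn σ).getD (j:ℕ) none).isSome then p else (1-p))
            = (if (σ j).isSome then p else (1-p)) := by
        intro j; rw [getD_ofFn]
      rw [Finset.prod_congr rfl (fun j _ => hCj j), fin_prod_if]
    have hsumnn : ∀ σ ∈ F, (0:ℝ) ≤ p ^ cnt (List.ofFn σ) * (1-p) ^ (T' - cnt (List.ofFn σ)) := by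
      intro σ _
      have h1 : (0:ℝ) ≤ p := le_of_lt hp0
      have h2 : (0:ℝ) ≤ 1 - p := by linarith
      positivity
    have hbound2 : (2:ℝ)^K ≤ (n:ℝ) := by
      have hp2 : 2 ^ (Nat.clog 2 m).pred < m :=
        Nat.pow_pred_clog_lt_self (by norm_num) (by omega)
      have hKp : K = (Nat.clog 2 m).pred := by
        rw [Nat.pred_eq_sub_one, hKdef, hLdef]
      have hnat : 2 ^ K ≤ n := by
        rw [hKp]
        have hmn : m ≤ n := by omega
        omega
      calc (2:ℝ)^K = ((2^K : ℕ) : ℝ) := by push_cast; ring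
        _ ≤ (n:ℝ) := by exact_mod_cast hnat
    calc μ {b : ℕ → Bool | T < HGP m b}
        ≤ μ (⋃ σ ∈ F, {b : ℕ → Bool | ∀ j, j < T' →
            b (idx ((List.ofFn σ).take j)) = ((List.ofFn σ).getD j none).isSome}) :=
          measure_mono hsub
      _ ≤ ∑ σ ∈ F, μ {b : ℕ → Bool | ∀ j, j < T' →
            b (idx ((List.ofFn σ).take j)) = ((List.ofFn σ).getD j none).isSome} :=
          measure_biUnion_finset_le F _
      _ = ∑ σ ∈ F, ENNReal.ofReal (p ^ cnt (List.ofFn σ) * (1-p) ^ (T' - cnt (List.ofFn σ))) :=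
          Finset.sum_congr rfl (fun σ _ => hcylval σ)
      _ = ENNReal.ofReal (∑ σ ∈ F, p ^ cnt (List.ofFn σ) * (1-p) ^ (T' - cnt (List.ofFn σ))) :=
          (ENNReal.ofReal_sum_of_nonneg hsumnn).symm
      _ ≤ ENNReal.ofReal (Real.exp (t*(K:ℝ)) * ((1-p) + 2*(p*Real.exp (-t)))^T') := by
          apply ENNReal.ofReal_le_ofReal
          exact sum_pow_bound T' K p (1-p) t (le_of_lt hp0) (by linarith) htnn
      _ ≤ ENNReal.ofReal ((2:ℝ)^K * Real.exp (-((c-1)^2/(2*c)) * (K:ℝ))) := by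
          apply ENNReal.ofReal_le_ofReal
          rw [htdef]
          exact chain c p hc hp0 hp1 K T' hK1 hcK
      _ ≤ ENNReal.ofReal ((n : ℝ) * Real.exp (-((c-1)^2 / (2*c)) * ((L:ℝ) - 1))) := by
          apply ENNReal.ofReal_le_ofReal
          rw [← hLK]
          apply mul_le_mul_of_nonneg_right hbound2 (le_of_lt (Real.exp_pos _))
end

section
/- Concentration of the number of failures (step (7) in the proof of the adversarial-failure theorem): let n ≥ 2, let ε = √(ln n / (n−1)), let f : ℕ with (f : ℝ) < (n−1)(1−ε), and let ν be the product probability measure on Fin (n−1) → Bool in which each coordinate is independently false with probability f/(n−1) + ε (and true otherwise). Then ν { c | f ≤ (number of indices i with c i = false) } ≥ 1 − n^(−2). -/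
open MeasureTheory


open Real

lemma my_pinsker {p x : ℝ} (hx0 : 0 ≤ x) (hxp : x ≤ p) (hp1 : p < 1) :
    2*(p-x)^2 ≤ x * Real.log x + (1-x) * Real.log (1-x)
      - x * Real.log p - (1-x) * Real.log (1-p) := by
  rcases eq_or_lt_of_le hxp with rfl | hlt
  · simp
  have hp0 : 0 < p := lt_of_le_of_lt hx0 hlt
  set g : ℝ → ℝ := fun t => Real.log t - Real.log (1-t) - 4*t with hg
  have hgd : ∀ t ∈ Set.Ioo (0:ℝ) 1, HasDerivAt g (t⁻¹ + (1-t)⁻¹ - 4) t := by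
    intro t ht
    have h1 : HasDerivAt Real.log t⁻¹ t := Real.hasDerivAt_log (ne_of_gt ht.1)
    have h2t : (1 - t) ≠ 0 := by intro h; have := ht.2; linarith
    have h2 : HasDerivAt (fun s : ℝ => Real.log (1 - s)) ((1-t)⁻¹ * (-1)) t :=
      (Real.hasDerivAt_log h2t).comp t ((hasDerivAt_id t).const_sub 1)
    have h3 : HasDerivAt (fun s : ℝ => 4*s) 4 t := by
      simpa using (hasDerivAt_id t).const_mul (4:ℝ)
    have := (h1.sub h2).sub h3
    exact this.congr_deriv (by ring)
  have hgmono : MonotoneOn g (Set.Ioo (0:ℝ) 1) := by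
    apply monotoneOn_of_deriv_nonneg (convex_Ioo 0 1)
    · exact fun t ht => ((hgd t ht).continuousAt.continuousWithinAt)
    · intro t ht
      rw [interior_Ioo] at ht
      exact (hgd t ht).differentiableAt.differentiableWithinAt
    · intro t ht
      rw [interior_Ioo] at ht
      rw [(hgd t ht).deriv]
      have h1 : 0 < t := ht.1
      have h2 : 0 < 1 - t := by linarith [ht.2]
      have key : t⁻¹ + (1-t)⁻¹ - 4 = (2*t-1)^2 / (t*(1-t)) := by
        field_simp; ring
      rw [key]; positivity
  set h : ℝ → ℝ := fun t => t * Real.log t + (1-t)*Real.log (1-t)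
      - t*Real.log p - (1-t)*Real.log (1-p) - 2*(p-t)^2 with hh
  have hcont : Continuous h := by
    have c1 : Continuous fun t:ℝ => t * Real.log t := Real.continuous_mul_log
    have c2 : Continuous fun t:ℝ => (1-t) * Real.log (1-t) :=
      c1.comp (continuous_const.sub continuous_id)
    exact ((((c1.add c2).sub (continuous_id.mul continuous_const)).sub
      ((continuous_const.sub continuous_id).mul continuous_const)).sub
      (continuous_const.mul ((continuous_const.sub continuous_id).pow 2)))
  have hhd : ∀ t ∈ Set.Ioo (0:ℝ) p, HasDerivAt h (g t - g p) t := by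
    intro t ht
    have ht0 : (0:ℝ) < t := ht.1
    have ht1 : t < 1 := lt_trans ht.2 hp1
    have h2t : (1 - t) ≠ 0 := by intro hcon; linarith [ht1]
    have h1 : HasDerivAt (fun s:ℝ => s * Real.log s) (Real.log t + 1) t :=
      Real.hasDerivAt_mul_log (ne_of_gt ht0)
    have h2 : HasDerivAt (fun s:ℝ => (1-s) * Real.log (1-s)) ((Real.log (1-t) + 1) * (-1)) t :=
      (Real.hasDerivAt_mul_log h2t).comp t ((hasDerivAt_id t).const_sub 1)
    have h3 : HasDerivAt (fun s:ℝ => s * Real.log p) (Real.log p) t :=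
      hasDerivAt_mul_const _
    have h4 : HasDerivAt (fun s:ℝ => (1-s) * Real.log (1-p)) ((-1) * Real.log (1-p)) t :=
      ((hasDerivAt_id t).const_sub 1).mul_const _
    have h5 : HasDerivAt (fun s:ℝ => 2*(p-s)^2) (2*((2:ℕ)*(p-t)^(1:ℕ)*(-1))) t :=
      (((hasDerivAt_id t).const_sub p).pow 2).const_mul 2
    have := (((h1.add h2).sub h3).sub h4).sub h5
    exact this.congr_deriv (by simp [hg]; ring)
  have hanti : AntitoneOn h (Set.Icc (0:ℝ) p) := by
    apply antitoneOn_of_deriv_nonpos (convex_Icc 0 p) hcont.continuousOn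
    · intro t ht
      rw [interior_Icc] at ht
      exact (hhd t ht).differentiableAt.differentiableWithinAt
    · intro t ht
      rw [interior_Icc] at ht
      rw [(hhd t ht).deriv]
      have : g t ≤ g p := hgmono ⟨ht.1, lt_trans ht.2 hp1⟩ ⟨lt_of_le_of_lt hx0 hlt, hp1⟩ ht.2.le
      linarith
  have hxmem : x ∈ Set.Icc (0:ℝ) p := ⟨hx0, hxp⟩
  have hpmem : p ∈ Set.Icc (0:ℝ) p := ⟨hp0.le, le_rfl⟩
  have := hanti hxmem hpmem hxp
  have hhp : h p = 0 := by simp only [hh]; ring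
  rw [hhp] at this
  simp only [hh] at this
  linarith

lemma my_prod_bool {m : ℕ} (c : Fin m → Bool) (a b : ℝ) :
    (∏ i, (if c i then b else a)) =
      a ^ (Finset.univ.filter (fun i => c i = false)).card *
      b ^ (m - (Finset.univ.filter (fun i => c i = false)).card) := by
  rw [← Finset.prod_filter_mul_prod_filter_not Finset.univ (fun i => c i = false)]
  have hcard : (Finset.univ.filter (fun i => ¬ c i = false)).card
      = m - (Finset.univ.filter (fun i => c i = false)).card := by
    have := Finset.card_filter_add_card_filter_not (s := (Finset.univ : Finset (Fin m)))
      (p := fun i => c i = false)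
    rw [Finset.card_univ, Fintype.card_fin] at this
    omega
  congr 1
  · rw [Finset.prod_congr rfl (fun i hi => ?_), Finset.prod_const]
    simp only [Finset.mem_filter] at hi
    simp [hi.2]
  · rw [Finset.prod_congr rfl (fun i hi => ?_), Finset.prod_const, hcard]
    simp only [Finset.mem_filter] at hi
    simp [hi.2]

lemma my_sum_prod {m : ℕ} (a b : ℝ) :
    ∑ c : Fin m → Bool, ∏ i, (if c i then b else a) = (b + a)^m := by
  classical
  have := (Fintype.prod_sum (ι := Fin m) (κ := fun _ => Bool)
    (f := fun _ b' => if b' then b else a)).symm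
  simp only [Fintype.sum_bool, if_true, if_false] at this
  rw [this, Finset.prod_const, Finset.card_univ, Fintype.card_fin]
  simp
lemma my_chernoff {m f : ℕ} {p : ℝ} (hm : 0 < m) (hf1 : 1 ≤ f)
    (hp : (f:ℝ)/(m:ℝ) < p) (hp1 : p < 1) :
    ∑ c ∈ Finset.univ.filter (fun c : Fin m → Bool =>
        (Finset.univ.filter (fun i => c i = false)).card < f),
      (∏ i, (if c i then (1-p) else p))
    ≤ Real.exp (-(2 * m * (p - ((f:ℝ)-1)/(m:ℝ))^2)) := by
  classical
  have hmR : (0:ℝ) < m := by exact_mod_cast hm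
  set q : ℝ := 1 - p with hqdef
  have hq0 : 0 < q := by simp only [hqdef]; linarith
  set x : ℝ := ((f:ℝ)-1)/(m:ℝ) with hxdef
  have hf1R : (1:ℝ) ≤ (f:ℝ) := by exact_mod_cast hf1
  have hx0 : 0 ≤ x := div_nonneg (by linarith) hmR.le
  have hxp : x < p := by
    have hfp : (f:ℝ) < p * m := by
      have := (div_lt_iff₀ hmR).mp hp
      linarith
    rw [hxdef, div_lt_iff₀ hmR]
    linarith
  have hp0 : 0 < p := lt_of_le_of_lt hx0 hxp
  have hx1 : x < 1 := hxp.trans hp1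
  have h1x : 0 < 1 - x := by linarith
  set r : ℝ := x * q / (1 - x) with hrdef
  set R : ℝ := p * (1 - x) / (x * q) with hRdef
  have hr0 : 0 ≤ r := div_nonneg (mul_nonneg hx0 hq0.le) h1x.le
  have hR0 : 0 ≤ R := div_nonneg (mul_nonneg hp0.le h1x.le) (mul_nonneg hx0 hq0.le)
  set K : (Fin m → Bool) → ℕ := fun c => (Finset.univ.filter (fun i => c i = false)).card
    with hKdef
  have key : ∀ c : Fin m → Bool, K c < f →
      p ^ (K c) * q ^ (m - K c) ≤ R ^ (f-1) * (r ^ (K c) * q ^ (m - K c)) := by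
    intro c hc
    by_cases hf2 : f = 1
    · have hxz : x = 0 := by rw [hxdef, hf2]; simp
      have hKz : K c = 0 := by omega
      rw [hKz, hf2]
      simp
    · have hf2' : 2 ≤ f := by omega
      have hx0' : 0 < x := by
        rw [hxdef]
        apply div_pos _ hmR
        have : (2:ℝ) ≤ (f:ℝ) := by exact_mod_cast hf2'
        linarith
      have hR0' : 0 < R := div_pos (mul_pos hp0 h1x) (mul_pos hx0' hq0)
      have hrR : R * r = p := by
        rw [hRdef, hrdef]
        field_simp
      have hR1 : 1 ≤ R := by
        rw [hRdef, le_div_iff₀ (mul_pos hx0' hq0)]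
        simp only [hqdef]
        nlinarith
      have hKle : K c ≤ f - 1 := by omega
      have heq : R ^ (f-1) * (r ^ (K c) * q ^ (m - K c))
          = R ^ (f-1-K c) * (p ^ (K c) * q ^ (m - K c)) := by
        have h1 : R ^ (f-1) = R^(f-1-K c) * R^(K c) := by
          rw [← pow_add]; congr 1; omega
        have h2 : R^(K c) * r^(K c) = p^(K c) := by rw [← mul_pow, hrR]
        calc R ^ (f-1) * (r ^ (K c) * q ^ (m - K c))
            = R^(f-1-K c) * ((R^(K c) * r^(K c)) * q ^ (m-K c)) := by rw [h1]; ring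
          _ = _ := by rw [h2]
      rw [heq]
      exact le_mul_of_one_le_left (by positivity) (one_le_pow₀ hR1)
  calc ∑ c ∈ Finset.univ.filter (fun c : Fin m → Bool => K c < f),
        (∏ i, (if c i then q else p))
      = ∑ c ∈ Finset.univ.filter (fun c : Fin m → Bool => K c < f),
        p ^ (K c) * q ^ (m - K c) := by
        refine Finset.sum_congr rfl (fun c _ => ?_)
        exact my_prod_bool c p q
    _ ≤ ∑ c ∈ Finset.univ.filter (fun c : Fin m → Bool => K c < f),
        R ^ (f-1) * (r ^ (K c) * q ^ (m - K c)) := by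
        refine Finset.sum_le_sum (fun c hc => ?_)
        exact key c (by simpa using hc)
    _ ≤ ∑ c : Fin m → Bool, R ^ (f-1) * (r ^ (K c) * q ^ (m - K c)) := by
        refine Finset.sum_le_sum_of_subset_of_nonneg (Finset.filter_subset _ _)
          (fun c _ _ => by positivity)
    _ = R ^ (f-1) * ∑ c : Fin m → Bool, (r ^ (K c) * q ^ (m - K c)) := by
        rw [Finset.mul_sum]
    _ = R ^ (f-1) * (q + r)^m := by
        congr 1
        rw [← my_sum_prod r q]
        exact Finset.sum_congr rfl (fun c _ => (my_prod_bool c r q).symm)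
    _ = R ^ (f-1) * (q / (1-x))^m := by
        congr 2
        rw [hrdef]
        field_simp
        ring
    _ ≤ Real.exp (-(2 * m * (p - x)^2)) := by
        by_cases hf2 : f = 1
        · have hxz : x = 0 := by rw [hxdef, hf2]; simp
          rw [hxz, hf2]
          simp only [Nat.sub_self, pow_zero, one_mul, sub_zero, div_one]
          rw [← Real.exp_log hq0, ← Real.exp_nat_mul]
          apply Real.exp_le_exp.mpr
          have P := my_pinsker (le_refl (0:ℝ)) hp0.le hp1
          simp only [Real.log_zero, sub_zero, Real.log_one, mul_zero, zero_mul, mul_one,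
            sub_self, one_mul, zero_add, zero_sub] at P
          have hq' : Real.log q ≤ -(2*p^2) := by
            rw [hqdef]; linarith
          have hmul : (m:ℝ) * Real.log q ≤ (m:ℝ) * (-(2*p^2)) :=
            mul_le_mul_of_nonneg_left hq' hmR.le
          nlinarith [hmul]
        · have hf2' : 2 ≤ f := by omega
          have hx0' : 0 < x := by
            rw [hxdef]
            apply div_pos _ hmR
            have : (2:ℝ) ≤ (f:ℝ) := by exact_mod_cast hf2'
            linarith
          have hR0' : 0 < R := div_pos (mul_pos hp0 h1x) (mul_pos hx0' hq0)
          have hQ : 0 < q / (1-x) := div_pos hq0 h1x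
          rw [← Real.exp_log (pow_pos hR0' (f-1)), ← Real.exp_log (pow_pos hQ m),
            ← Real.exp_add, Real.log_pow, Real.log_pow]
          apply Real.exp_le_exp.mpr
          have hcast : ((f-1 : ℕ) : ℝ) = (m:ℝ) * x := by
            rw [Nat.cast_sub hf1, Nat.cast_one, hxdef]
            field_simp
          have hlogR : Real.log R = Real.log p + Real.log (1-x) - Real.log x - Real.log q := by
            rw [hRdef, Real.log_div (by positivity) (by positivity),
              Real.log_mul hp0.ne' h1x.ne', Real.log_mul hx0'.ne' hq0.ne']
            ring
          have hlogQ : Real.log (q / (1-x)) = Real.log q - Real.log (1-x) :=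
            Real.log_div hq0.ne' h1x.ne'
          rw [hcast, hlogR, hlogQ]
          have P := my_pinsker hx0 hxp.le hp1
          rw [← hqdef] at P
          nlinarith [mul_le_mul_of_nonneg_left P hmR.le]
  done


/-- Concentration of the number of failures: if `ν` is the product measure on
`Fin (n-1) → Bool` in which each coordinate is independently `false` with
probability `f/(n-1) + ε` (and `true` otherwise), where
`ε = √(ln n/(n-1))` and `f < (n-1)(1-ε)`, then with probability at least
`1 - n⁻²` at least `f` coordinates are `false`. -/
theorem failure_count_concentration (n : ℕ) (hn : 2 ≤ n) (ε : ℝ)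
    (hε : ε = Real.sqrt (Real.log n / ((n:ℝ) - 1)))
    (f : ℕ) (hf : (f : ℝ) < ((n:ℝ) - 1) * (1 - ε))
    (ν : Measure (Fin (n-1) → Bool)) [IsProbabilityMeasure ν]
    (hν : ∀ c : Fin (n-1) → Bool, ν {c} =
      ∏ i, (if c i then ENNReal.ofReal (1 - ((f:ℝ) / ((n:ℝ) - 1) + ε))
            else ENNReal.ofReal ((f:ℝ) / ((n:ℝ) - 1) + ε))) :
    ENNReal.ofReal (1 - (n:ℝ)^(-2 : ℤ)) ≤
      ν {c | f ≤ (Finset.univ.filter (fun i => c i = false)).card} := by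
  classical
  have hm : 0 < n - 1 := by omega
  have hn0 : (0:ℝ) < n := by positivity
  have hnR : (2:ℝ) ≤ (n:ℝ) := by exact_mod_cast hn
  have hM0 : (0:ℝ) < (n:ℝ) - 1 := by linarith
  have hmcast : ((n-1 : ℕ) : ℝ) = (n:ℝ) - 1 := by
    rw [Nat.cast_sub (by omega), Nat.cast_one]
  have hlogn : 0 < Real.log n := Real.log_pos (by exact_mod_cast hn)
  have hε0 : 0 < ε := by
    rw [hε]; exact Real.sqrt_pos.mpr (div_pos hlogn hM0)
  have hε2 : ε^2 = Real.log n / ((n:ℝ) - 1) := by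
    rw [hε, Real.sq_sqrt (div_nonneg hlogn.le hM0.le)]
  set p : ℝ := (f:ℝ) / ((n:ℝ) - 1) + ε with hpdef
  have hp0 : (0:ℝ) ≤ p := by rw [hpdef]; positivity
  have hfd : (f:ℝ) / ((n:ℝ) - 1) < 1 - ε := by
    rw [div_lt_iff₀ hM0]; linarith [hf]
  have hp1 : p < 1 := by rw [hpdef]; linarith
  have ha0 : (0:ℝ) ≤ (n:ℝ)^(-2:ℤ) := by positivity
  rcases Nat.eq_zero_or_pos f with rfl | hf1
  · have huniv : {c : Fin (n-1) → Bool |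
        (0:ℕ) ≤ (Finset.univ.filter (fun i => c i = false)).card} = Set.univ := by
      ext c; simp
    rw [huniv, measure_univ]
    exact ENNReal.ofReal_le_one.mpr (by linarith)
  · set T : Finset (Fin (n-1) → Bool) := Finset.univ.filter
      (fun c => (Finset.univ.filter (fun i => c i = false)).card < f) with hTdef
    have hT : ν ↑T ≤ ENNReal.ofReal ((n:ℝ)^(-2:ℤ)) := by
      have hTcoe : (↑T : Set (Fin (n-1) → Bool)) = ⋃ c ∈ T, {c} := by ext y; simp [eq_comm]
      rw [hTcoe, measure_biUnion_finset
        (fun a _ b _ hab => Set.disjoint_singleton.mpr hab)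
        (fun b _ => measurableSet_singleton b)]
      have hterm : ∀ c : Fin (n-1) → Bool, ν {c}
          = ENNReal.ofReal (∏ i, (if c i then (1-p) else p)) := by
        intro c
        rw [hν c, ENNReal.ofReal_prod_of_nonneg (fun i _ => by
          by_cases h : c i <;> simp [h] <;> linarith [hp0, hp1])]
        simp only [apply_ite ENNReal.ofReal]
      rw [Finset.sum_congr rfl (fun c _ => hterm c),
        ← ENNReal.ofReal_sum_of_nonneg (fun c _ => Finset.prod_nonneg (fun i _ => by
          by_cases h : c i <;> simp [h] <;> linarith [hp0, hp1]))]
      apply ENNReal.ofReal_le_ofReal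
      have hpgt : (f:ℝ)/((n-1:ℕ):ℝ) < p := by
        rw [hmcast, hpdef]; linarith
      refine le_trans (my_chernoff hm hf1 hpgt hp1) ?_
      have hgap : ε ≤ p - ((f:ℝ)-1)/((n-1:ℕ):ℝ) := by
        rw [hmcast, hpdef]
        have h1 : ((f:ℝ)-1)/((n:ℝ)-1) ≤ (f:ℝ)/((n:ℝ)-1) :=
          (div_le_div_iff_of_pos_right hM0).mpr (by linarith)
        linarith
      have hsq : ε^2 ≤ (p - ((f:ℝ)-1)/((n-1:ℕ):ℝ))^2 :=
        pow_le_pow_left₀ hε0.le hgap 2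
      have hexp : Real.exp (-(2 * ((n-1:ℕ):ℝ) * (p - ((f:ℝ)-1)/((n-1:ℕ):ℝ))^2))
          ≤ Real.exp (-(2 * Real.log n)) := by
        apply Real.exp_le_exp.mpr
        have hcalc : ((n-1:ℕ):ℝ) * ε^2 = Real.log n := by
          rw [hmcast, hε2]; field_simp
        nlinarith [hsq, hM0, hmcast]
      refine le_trans hexp ?_
      have : (n:ℝ)^(-2:ℤ) = Real.exp (Real.log n * (-2)) := by
        rw [← Real.rpow_intCast, Real.rpow_def_of_pos hn0]
        norm_num
      rw [this]
      apply Real.exp_le_exp.mpr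
      linarith
    have hsplit : (1:ENNReal) ≤ ν {c | f ≤ (Finset.univ.filter (fun i => c i = false)).card}
        + ν ↑T := by
      rw [← measure_univ (μ := ν)]
      refine le_trans (measure_mono ?_) (measure_union_le _ _)
      intro c _
      simp only [Set.mem_union, Set.mem_setOf_eq, Finset.mem_coe, hTdef, Finset.mem_filter,
        Finset.mem_univ, true_and]
      omega
    rw [ENNReal.ofReal_sub _ ha0, ENNReal.ofReal_one, tsub_le_iff_right]
    exact le_trans hsplit (add_le_add_right hT _)
end
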